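/- If f : G_{m,n} → T is a cyclically L̄-dappled tiling, then its periodic extension to G_{km,ln} (defined by F(i,j) = f(i mod m, j mod n)) is an L-dappled tiling of G_{km,ln} for the corresponding non-cyclic conditions L = {H^{p(t)}_t, V^{q(t)}_t}, for every k, l ≥ 1, provided p(t) < m and q(t) < n for all t. -/
import Mathlib


def vioH {T : Type*} (f : ℕ → ℕ → T) (p : ℕ) (t : T) (i j : ℕ) : Prop :=
  p ≤ i ∧ ∀ s ≤ p, f (i - s) j = t

def vioV {T : Type*} (f : ℕ → ℕ → T) (q : ℕ) (t : T) (i j : ℕ) : Prop :=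
  q ≤ j ∧ ∀ s ≤ q, f i (j - s) = t

def Dappled {T : Type*} (m n : ℕ) (p q : T → ℕ) (f : ℕ → ℕ → T) : Prop :=
  ∀ t : T, ∀ i < m, ∀ j < n, ¬ vioH f (p t) t i j ∧ ¬ vioV f (q t) t i j

lemma mod_sub_key (i s m : ℕ) (hs : s ≤ m) (hsi : s ≤ i) :
    (i - s) % m = (i % m + m - s) % m := by
  have h1 : i % m + m - s = i % m + (m - s) := by omega
  have h2 : (i % m + (m - s)) % m = (i + (m - s)) % m := Nat.mod_add_mod i m (m - s)
  have h3 : i + (m - s) = (i - s) + m := by omega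
  rw [h1, h2, h3, Nat.add_mod_right]

/-- The periodic extension of a cyclically `L̄`-dappled tiling of `G_{m,n}` to
`G_{km,ln}` is `L`-dappled, provided `p(t) < m` and `q(t) < n` for all `t`. -/
theorem stmt15 {T : Type*} (m n : ℕ) (hm : 0 < m) (hn : 0 < n)
    (p q : T → ℕ) (hpm : ∀ t, p t < m) (hqn : ∀ t, q t < n)
    (f : ℕ → ℕ → T)
    (hH : ∀ t : T, ∀ i < m, ∀ j < n, ¬ ∀ s ≤ p t, f ((i + m - s) % m) j = t)
    (hV : ∀ t : T, ∀ i < m, ∀ j < n, ¬ ∀ s ≤ q t, f i ((j + n - s) % n) = t)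
    (k l : ℕ) (hk : 1 ≤ k) (hl : 1 ≤ l) :
    Dappled (k * m) (l * n) p q (fun i j => f (i % m) (j % n)) := by
  intro t i hi j hj
  constructor
  · rintro ⟨hpi, hvio⟩
    apply hH t (i % m) (Nat.mod_lt _ hm) (j % n) (Nat.mod_lt _ hn)
    intro s hs
    have h := hvio s hs
    simp only at h
    rwa [mod_sub_key i s m (le_of_lt (lt_of_le_of_lt hs (hpm t))) (le_trans hs hpi)] at h
  · rintro ⟨hqj, hvio⟩
    apply hV t (i % m) (Nat.mod_lt _ hm) (j % n) (Nat.mod_lt _ hn)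
    intro s hs
    have h := hvio s hs
    simp only at h
    rwa [mod_sub_key j s n (le_of_lt (lt_of_le_of_lt hs (hqn t))) (le_trans hs hqj)] at h
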